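/- Let a₁, a₂, …, a_k be positive integers with gcd(a₁,…,a_k) = 1, and let λ be a complex number with λ ≠ 0 and λ^{a₁} ≠ 1. Then ∑_{n ∈ NR} λⁿ n² = (1/(λ^{a₁} − 1)) ∑_{i=0}^{a₁−1} m_i² λ^{m_i} − (2 a₁ λ^{a₁}/(λ^{a₁} − 1)²) ∑_{i=0}^{a₁−1} m_i λ^{m_i} + (a₁² λ^{a₁}(λ^{a₁} + 1)/(λ^{a₁} − 1)³) ∑_{i=0}^{a₁−1} λ^{m_i} − λ(λ + 1)/(λ − 1)³. -/

import Mathlib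

set_option maxHeartbeats 2000000

open Finset

/-- closed form for `∑ i λ^i` with denominators cleared. -/
lemma wss_sum1 (lam : ℂ) : ∀ q : ℕ, (lam - 1) ^ 2 * ∑ i ∈ Finset.range q, (i : ℂ) * lam ^ i
    = lam - (q : ℂ) * lam ^ q + ((q : ℂ) - 1) * lam ^ q * lam := by
  intro q
  induction q with
  | zero => simp
  | succ q ih =>
    rw [Finset.sum_range_succ, mul_add, ih, pow_succ]
    push_cast
    ring

/-- closed form for `∑ i² λ^i` with denominators cleared. -/
lemma wss_sum2 (lam : ℂ) : ∀ q : ℕ, (lam - 1) ^ 3 * ∑ i ∈ Finset.range q, (i : ℂ) ^ 2 * lam ^ i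
    = -lam * (1 + lam) + lam ^ q * (((q : ℂ) - 1) ^ 2 * lam ^ 2
        - (2 * (q : ℂ) ^ 2 - 2 * (q : ℂ) - 1) * lam + (q : ℂ) ^ 2) := by
  intro q
  induction q with
  | zero => simp; ring
  | succ q ih =>
    rw [Finset.sum_range_succ, mul_add, ih, pow_succ]
    push_cast
    ring

/-- telescoping evaluation of `∑_{j<q} x^j (c+bj)²` with denominators cleared. -/
lemma wss_tele (x c b : ℂ) : ∀ q : ℕ,
    (x - 1) ^ 3 * ∑ j ∈ Finset.range q, x ^ j * (c + b * (j : ℂ)) ^ 2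
      = x ^ q * ((c + b * (q : ℂ)) ^ 2 * (x - 1) ^ 2
          - 2 * b * x * (c + b * (q : ℂ)) * (x - 1) + b ^ 2 * x * (x + 1))
        - (c ^ 2 * (x - 1) ^ 2 - 2 * b * x * c * (x - 1) + b ^ 2 * x * (x + 1)) := by
  intro q
  induction q with
  | zero => simp
  | succ q ih =>
    rw [Finset.sum_range_succ, mul_add, ih, pow_succ]
    push_cast
    ring

/-- the "constant term" identity: `(λ-1)³ ∑_{i<a} λ^i H(i) = λ(λ+1)(λ^a-1)³`. -/
lemma wss_const (lam : ℂ) (a : ℕ) :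
    (lam - 1) ^ 3 * ∑ i ∈ Finset.range a, lam ^ i *
        ((i : ℂ) ^ 2 * (lam ^ a - 1) ^ 2
          - 2 * (a : ℂ) * lam ^ a * (i : ℂ) * (lam ^ a - 1)
          + (a : ℂ) ^ 2 * lam ^ a * (lam ^ a + 1))
      = lam * (lam + 1) * (lam ^ a - 1) ^ 3 := by
  set x : ℂ := lam ^ a with hx
  have e : ∑ i ∈ Finset.range a, lam ^ i *
      ((i : ℂ) ^ 2 * (x - 1) ^ 2 - 2 * (a : ℂ) * x * (i : ℂ) * (x - 1)
        + (a : ℂ) ^ 2 * x * (x + 1))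
      = (x - 1) ^ 2 * ∑ i ∈ Finset.range a, (i : ℂ) ^ 2 * lam ^ i
        - 2 * (a : ℂ) * x * (x - 1) * ∑ i ∈ Finset.range a, (i : ℂ) * lam ^ i
        + (a : ℂ) ^ 2 * x * (x + 1) * ∑ i ∈ Finset.range a, lam ^ i := by
    rw [Finset.mul_sum, Finset.mul_sum, Finset.mul_sum, ← Finset.sum_sub_distrib,
      ← Finset.sum_add_distrib]
    exact Finset.sum_congr rfl fun i _ => by ring
  rw [e]
  have h0 := geom_sum_mul lam a
  have h1 := wss_sum1 lam a
  have h2 := wss_sum2 lam a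
  linear_combination (x - 1) ^ 2 * h2 - 2 * (a : ℂ) * x * (x - 1) * (lam - 1) * h1
    + (a : ℂ) ^ 2 * x * (x + 1) * (lam - 1) ^ 2 * h0

lemma wss_div (x l A B C d : ℂ) (hx : x - 1 ≠ 0) :
    (x - 1) ^ 3 * ((1 / (x - 1)) * A - (2 * d * x / (x - 1) ^ 2) * B
        + (d ^ 2 * x * (x + 1) / (x - 1) ^ 3) * C - l * (l + 1) / (l - 1) ^ 3)
      = (x - 1) ^ 2 * A - 2 * d * x * (x - 1) * B + d ^ 2 * x * (x + 1) * C
        - l * (l + 1) * (x - 1) ^ 3 / (l - 1) ^ 3 := by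
  have e1 : (x - 1) ^ 3 * ((1 / (x - 1)) * A) = (x - 1) ^ 2 * A := by
    field_simp
  have e2 : (x - 1) ^ 3 * ((2 * d * x / (x - 1) ^ 2) * B) = 2 * d * x * (x - 1) * B := by
    field_simp
  have e3 : (x - 1) ^ 3 * ((d ^ 2 * x * (x + 1) / (x - 1) ^ 3) * C) = d ^ 2 * x * (x + 1) * C := by
    field_simp
  have e4 : (x - 1) ^ 3 * (l * (l + 1) / (l - 1) ^ 3) = l * (l + 1) * (x - 1) ^ 3 / (l - 1) ^ 3 := by
    rw [mul_div_assoc', mul_comm]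
  rw [mul_sub, mul_add, mul_sub, e1, e2, e3, e4]

/-- the weighted sum `∑_{n ∈ NR} λⁿ n²` for `λ ≠ 0`, `λ^{a₁} ≠ 1`. -/
theorem weighted_square_sylvester_sum
    (k : ℕ) (hk : 0 < k) (a : Fin k → ℕ) (ha : ∀ i, 0 < a i)
    (hgcd : Finset.univ.gcd a = 1)
    (lam : ℂ) (hlam0 : lam ≠ 0) (hlama : lam ^ a ⟨0, hk⟩ ≠ 1)
    (m : ℕ → ℕ)
    (hm : ∀ i < a ⟨0, hk⟩,
      (∃ x : Fin k → ℕ, m i = ∑ j, x j * a j) ∧ m i % a ⟨0, hk⟩ = i ∧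
        ∀ n : ℕ, (∃ x : Fin k → ℕ, n = ∑ j, x j * a j) → n % a ⟨0, hk⟩ = i → m i ≤ n) :
    ∑ᶠ n ∈ {n : ℕ | 0 < n ∧ ¬∃ x : Fin k → ℕ, n = ∑ j, x j * a j},
        lam ^ n * (n : ℂ) ^ 2 =
      (1 / (lam ^ a ⟨0, hk⟩ - 1)) *
          ∑ i ∈ Finset.range (a ⟨0, hk⟩), (m i : ℂ) ^ 2 * lam ^ m i
        - (2 * (a ⟨0, hk⟩ : ℂ) * lam ^ a ⟨0, hk⟩ / (lam ^ a ⟨0, hk⟩ - 1) ^ 2) *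
          ∑ i ∈ Finset.range (a ⟨0, hk⟩), (m i : ℂ) * lam ^ m i
        + ((a ⟨0, hk⟩ : ℂ) ^ 2 * lam ^ a ⟨0, hk⟩ * (lam ^ a ⟨0, hk⟩ + 1) /
            (lam ^ a ⟨0, hk⟩ - 1) ^ 3) *
          ∑ i ∈ Finset.range (a ⟨0, hk⟩), lam ^ m i
        - lam * (lam + 1) / (lam - 1) ^ 3 := by
  classical
  set i0 : Fin k := ⟨0, hk⟩ with hi0
  set a1 : ℕ := a i0 with ha1def
  have ha1 : 0 < a1 := ha i0
  set P : ℕ → Prop := fun n => ∃ x : Fin k → ℕ, n = ∑ j, x j * a j with hP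
  -- P closed under adding a1
  have hstep : ∀ n, P n → P (n + a1) := by
    rintro n ⟨x, hx⟩
    refine ⟨fun j => if j = i0 then x j + 1 else x j, ?_⟩
    have : ∀ j ∈ Finset.univ (α := Fin k),
        (if j = i0 then x j + 1 else x j) * a j = x j * a j + if j = i0 then a j else 0 := by
      intro j _
      by_cases h : j = i0 <;> simp [h] <;> ring
    rw [Finset.sum_congr rfl this, Finset.sum_add_distrib, Finset.sum_ite_eq' Finset.univ i0 a,
      if_pos (Finset.mem_univ i0), hx]
  have hrep : ∀ i, i < a1 → ∀ t : ℕ, P (m i + a1 * t) := by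
    intro i hi t
    induction t with
    | zero => simpa using (hm i hi).1
    | succ t ih =>
      have : m i + a1 * (t + 1) = (m i + a1 * t) + a1 := by ring
      rw [this]
      exact hstep _ ih
  have hm0 : m 0 = 0 := by
    have h0 : P 0 := ⟨0, by simp⟩
    have := (hm 0 ha1).2.2 0 h0 (Nat.zero_mod a1)
    omega
  -- characterization of NR
  have hchar : {n : ℕ | 0 < n ∧ ¬ P n} = {n : ℕ | n < m (n % a1)} := by
    ext n
    simp only [Set.mem_setOf_eq]
    constructor
    · rintro ⟨hpos, hnp⟩
      by_contra h
      push_neg at h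
      have hi : n % a1 < a1 := Nat.mod_lt n ha1
      have hmod : m (n % a1) % a1 = n % a1 := (hm _ hi).2.1
      have hdvd : a1 ∣ n - m (n % a1) := by
        have hme : m (n % a1) ≡ n [MOD a1] := by
          show m (n % a1) % a1 = n % a1
          exact hmod
        exact (Nat.modEq_iff_dvd' h).mp hme
      obtain ⟨t, ht⟩ := hdvd
      have hn : n = m (n % a1) + a1 * t := by omega
      exact hnp (hn ▸ hrep _ hi t)
    · intro h
      have hi : n % a1 < a1 := Nat.mod_lt n ha1
      have hnp : ¬ P n := fun hp => absurd ((hm _ hi).2.2 n hp rfl) (by omega)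
      refine ⟨?_, hnp⟩
      rcases Nat.eq_zero_or_pos n with h0 | h0
      · subst h0
        simp [Nat.zero_mod, hm0] at h
      · exact h0
  -- finite version
  set N : ℕ := (Finset.range a1).sup m with hN
  set s : Finset ℕ := (Finset.range N).filter (fun n => n < m (n % a1)) with hs
  have hsetfin : {n : ℕ | n < m (n % a1)} = ↑s := by
    ext n
    simp only [hs, Finset.coe_filter, Finset.mem_range, Set.mem_setOf_eq]
    constructor
    · intro h
      refine ⟨lt_of_lt_of_le h ?_, h⟩
      exact Finset.le_sup (Finset.mem_range.mpr (Nat.mod_lt n ha1))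
    · exact fun h => h.2
  have hfs : ∑ᶠ n ∈ {n : ℕ | 0 < n ∧ ¬ P n}, lam ^ n * (n : ℂ) ^ 2
      = ∑ n ∈ s, lam ^ n * (n : ℂ) ^ 2 := by
    rw [hchar, hsetfin, finsum_mem_coe_finset]
  -- q i and m i = i + a1 * q i for i < a1
  set q : ℕ → ℕ := fun i => m i / a1 with hq
  have hmq : ∀ i, i < a1 → m i = i + a1 * q i := by
    intro i hi
    have h1 := Nat.div_add_mod (m i) a1
    have h2 := (hm i hi).2.1
    simp only [hq]
    omega
  -- reindex s as a sigma type
  have hbij : ∑ n ∈ s, lam ^ n * (n : ℂ) ^ 2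
      = ∑ p ∈ (Finset.range a1).sigma (fun i => Finset.range (q i)),
          lam ^ (p.1 + a1 * p.2) * ((p.1 + a1 * p.2 : ℕ) : ℂ) ^ 2 := by
    apply Finset.sum_nbij' (i := fun n => (⟨n % a1, n / a1⟩ : Σ _i : ℕ, ℕ))
      (j := fun p => p.1 + a1 * p.2)
    · intro n hn
      simp only [hs, Finset.mem_filter, Finset.mem_range] at hn
      simp only [Finset.mem_sigma, Finset.mem_range]
      refine ⟨Nat.mod_lt n ha1, ?_⟩
      have hi : n % a1 < a1 := Nat.mod_lt n ha1
      have h1 := hmq _ hi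
      have h2 := Nat.div_add_mod n a1
      have h3 := hn.2
      have h4 : a1 * (n / a1) < a1 * q (n % a1) := by omega
      exact lt_of_mul_lt_mul_left h4 (Nat.zero_le a1)
    · intro p hp
      simp only [Finset.mem_sigma, Finset.mem_range] at hp
      obtain ⟨hp1, hp2⟩ := hp
      have hmod : (p.1 + a1 * p.2) % a1 = p.1 := by
        rw [Nat.add_mul_mod_self_left, Nat.mod_eq_of_lt hp1]
      have hlt : p.1 + a1 * p.2 < m p.1 := by
        have h5 := hmq _ hp1
        have h6 : a1 * p.2 < a1 * q p.1 := (Nat.mul_lt_mul_left ha1).mpr hp2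
        omega
      simp only [hs, Finset.mem_filter, Finset.mem_range]
      refine ⟨lt_of_lt_of_le hlt (Finset.le_sup (Finset.mem_range.mpr hp1)), ?_⟩
      rw [hmod]
      exact hlt
    · intro n hn
      simp only
      have := Nat.div_add_mod n a1
      omega
    · intro p hp
      simp only [Finset.mem_sigma, Finset.mem_range] at hp
      have hmod : (p.1 + a1 * p.2) % a1 = p.1 := by
        rw [Nat.add_mul_mod_self_left, Nat.mod_eq_of_lt hp.1]
      have hdiv : (p.1 + a1 * p.2) / a1 = p.2 := by
        rw [Nat.add_mul_div_left _ _ ha1, Nat.div_eq_of_lt hp.1, Nat.zero_add]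
      obtain ⟨p1, p2⟩ := p
      simp only at hmod hdiv
      rw [hmod, hdiv]
    · intro n hn
      simp only
      have hdm : n % a1 + a1 * (n / a1) = n := by
        have := Nat.div_add_mod n a1
        omega
      rw [hdm]
  rw [hfs, hbij, Finset.sum_sigma]
  -- now the algebraic part
  have hlam1 : lam - 1 ≠ 0 := by
    intro h
    rw [sub_eq_zero] at h
    exact hlama (by rw [h, one_pow])
  set x : ℂ := lam ^ a1 with hxdef
  have hx : x - 1 ≠ 0 := sub_ne_zero.mpr hlama
  set H : ℂ → ℂ := fun n => n ^ 2 * (x - 1) ^ 2 - 2 * (a1 : ℂ) * x * n * (x - 1)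
      + (a1 : ℂ) ^ 2 * x * (x + 1) with hH
  -- inner sums
  have inner : ∀ i ∈ Finset.range a1,
      (x - 1) ^ 3 * ∑ j ∈ Finset.range (q i), lam ^ (i + a1 * j) * ((i + a1 * j : ℕ) : ℂ) ^ 2
        = lam ^ (m i) * H (m i) - lam ^ i * H (i : ℂ) := by
    intro i hi
    rw [Finset.mem_range] at hi
    have e1 : ∀ j ∈ Finset.range (q i),
        lam ^ (i + a1 * j) * ((i + a1 * j : ℕ) : ℂ) ^ 2
          = lam ^ i * (x ^ j * ((i : ℂ) + (a1 : ℂ) * (j : ℂ)) ^ 2) := by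
      intro j _
      rw [pow_add, pow_mul, ← hxdef]
      push_cast
      ring
    rw [Finset.sum_congr rfl e1, ← Finset.mul_sum]
    have ht := wss_tele x (i : ℂ) (a1 : ℂ) (q i)
    have hmi : lam ^ (m i) = lam ^ i * x ^ (q i) := by
      rw [hxdef, ← pow_mul, ← pow_add, ← hmq i hi]
    have hmc : ((m i : ℕ) : ℂ) = (i : ℂ) + (a1 : ℂ) * ((q i : ℕ) : ℂ) := by
      rw [hmq i hi]; push_cast; ring
    rw [hmi, hH]
    simp only [hmc]
    linear_combination lam ^ i * ht
  -- multiply-out strategy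
  apply mul_left_cancel₀ (pow_ne_zero 3 hx)
  rw [Finset.mul_sum, Finset.sum_congr rfl inner, Finset.sum_sub_distrib]
  have hA : ∑ i ∈ Finset.range a1, lam ^ (m i) * H (m i)
      = (x - 1) ^ 2 * ∑ i ∈ Finset.range a1, ((m i : ℕ) : ℂ) ^ 2 * lam ^ (m i)
        - 2 * (a1 : ℂ) * x * (x - 1) * ∑ i ∈ Finset.range a1, ((m i : ℕ) : ℂ) * lam ^ (m i)
        + (a1 : ℂ) ^ 2 * x * (x + 1) * ∑ i ∈ Finset.range a1, lam ^ (m i) := by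
    rw [Finset.mul_sum, Finset.mul_sum, Finset.mul_sum, ← Finset.sum_sub_distrib,
      ← Finset.sum_add_distrib]
    exact Finset.sum_congr rfl fun i _ => by rw [hH]; ring
  have hC := wss_const lam a1
  rw [← hxdef] at hC
  have hCsum : ∑ i ∈ Finset.range a1, lam ^ i * H (i : ℂ)
      = lam * (lam + 1) * (x - 1) ^ 3 / (lam - 1) ^ 3 := by
    rw [eq_div_iff (pow_ne_zero 3 hlam1)]
    rw [← hC, hH]
    ring
  rw [hA, hCsum]
  rw [wss_div x lam _ _ _ (a1 : ℂ) hx]
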